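/- Let G be a finitely generated group with a surjective homomorphism χ : G → ℤ. Then either ker(χ) is finitely generated, or G can be written as a proper HNN extension with associated homomorphism χ: there exist a subgroup H of ker(χ), subgroups A and B of H with at least one of A, B a proper subgroup of H, and an element t ∈ G with χ(t) = 1, such that t A t⁻¹ = B, G is generated by H ∪ {t}, and the canonical homomorphism from the HNN extension of H with associated subgroups A and B (with stable letter mapping to t and the isomorphism A → B given by conjugation by t) to G is an isomorphism. -/

import Mathlib

open Subgroup Multiplicative

private theorem form_lemma {K : Type*} [Group K] {Hh : Type*} [Group Hh]
    (o : Hh →* K) (τ : K) (Φ : Hh → Hh)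
    (rule : ∀ h, τ * o h = o (Φ h) * τ)
    (x : K) (hx : x ∈ Subgroup.closure (Set.range o ∪ {τ})) :
    ∃ (m n : ℕ) (h : Hh), x = (τ ^ m)⁻¹ * o h * τ ^ n := by
  have powrule : ∀ (n : ℕ) (h : Hh), τ ^ n * o h = o (Φ^[n] h) * τ ^ n := by
    intro n
    induction n with
    | zero => intro h; simp
    | succ n ih =>
      intro h
      rw [pow_succ, mul_assoc, rule, ← mul_assoc, ih, Function.iterate_succ_apply,
        mul_assoc]
  induction hx using Subgroup.closure_induction with
  | mem y hy =>
    rcases hy with ⟨h, rfl⟩ | rfl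
    · exact ⟨0, 0, h, by simp⟩
    · exact ⟨0, 1, 1, by simp⟩
  | one => exact ⟨0, 0, 1, by simp⟩
  | mul x y _ _ ihx ihy =>
    obtain ⟨m, n, h, rfl⟩ := ihx
    obtain ⟨m', n', h', rfl⟩ := ihy
    refine ⟨m + m', n + n', Φ^[m'] h * Φ^[n] h', ?_⟩
    have h1 : o (Φ^[m'] h) = τ ^ m' * o h * (τ ^ m')⁻¹ := by rw [powrule]; group
    have h2 : o (Φ^[n] h') = τ ^ n * o h' * (τ ^ n)⁻¹ := by rw [powrule]; group
    rw [map_mul, h1, h2]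
    group
  | inv x _ ihx =>
    obtain ⟨m, n, h, rfl⟩ := ihx
    exact ⟨n, m, h⁻¹, by rw [map_inv]; group⟩

private theorem inj_aux {G K Hh : Type*} [Group G] [Group K] [Group Hh]
    (χ : G →* Multiplicative ℤ) (f : K →* G) (o : Hh →* K) (τ : K) (Φ : Hh → Hh)
    (rule : ∀ h, τ * o h = o (Φ h) * τ)
    (htop : ∀ x : K, x ∈ Subgroup.closure (Set.range o ∪ {τ}))
    (hτ : χ (f τ) = Multiplicative.ofAdd 1 ∨ χ (f τ) = Multiplicative.ofAdd (-1))
    (hker : ∀ h, χ (f (o h)) = 1)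
    (hoinj : Function.Injective (f ∘ o)) :
    Function.Injective f := by
  rw [injective_iff_map_eq_one]
  intro x hfx
  obtain ⟨m, n, h, rfl⟩ := form_lemma o τ Φ rule x (htop x)
  set u := f τ with hu
  have heq : (u ^ m)⁻¹ * f (o h) * u ^ n = 1 := by
    simpa [map_mul, map_inv, map_pow] using hfx
  have hχ := congrArg χ heq
  simp only [map_mul, map_inv, map_pow, hker, mul_one, map_one] at hχ
  have hmn : m = n := by
    rcases hτ with hτ | hτ <;>
    · rw [hτ] at hχ
      have := congrArg Multiplicative.toAdd hχ
      simp [toAdd_pow] at this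
      omega
  subst hmn
  have hoh : f (o h) = 1 := by
    have := congrArg (fun y => u ^ m * y * (u ^ m)⁻¹) heq
    simpa [mul_assoc] using this
  have : h = 1 := hoinj (by simpa using hoh)
  subst this
  simp

private theorem hnn_package {G : Type*} [Group G] (χ : G →* Multiplicative ℤ) (t : G)
    (H A B : Subgroup G)
    (ht : χ t = Multiplicative.ofAdd 1) (hker : H ≤ χ.ker)
    (hA : A ≤ H) (hB : B ≤ H)
    (himg : (fun g => t * g * t⁻¹) '' (A : Set G) = (B : Set G))
    (hfull : A = H ∨ B = H)
    (hclos : Subgroup.closure ((H : Set G) ∪ {t}) = ⊤) :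
    ∃ (φ : (A.subgroupOf H) ≃* (B.subgroupOf H)),
      (∀ a : A.subgroupOf H, ((φ a : ↥H) : G) = t * ((a : ↥H) : G) * t⁻¹) ∧
      ∃ e : HNNExtension ↥H (A.subgroupOf H) (B.subgroupOf H) φ ≃* G,
        (∀ h : ↥H, e (HNNExtension.of h) = (h : G)) ∧ e HNNExtension.t = t := by
  have hAB : ∀ g ∈ A, t * g * t⁻¹ ∈ B := by
    intro g hg
    have : t * g * t⁻¹ ∈ ((fun g => t * g * t⁻¹) '' (A : Set G)) := ⟨g, hg, rfl⟩
    rwa [himg] at this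
  have hBA : ∀ g ∈ B, t⁻¹ * g * t ∈ A := by
    intro g hg
    obtain ⟨a, ha, rfl⟩ := (Set.ext_iff.mp himg g).mpr hg
    simpa [mul_assoc] using ha
  let φ : (A.subgroupOf H) ≃* (B.subgroupOf H) :=
    { toFun := fun a => ⟨⟨t * ((a : ↥H) : G) * t⁻¹, hB (hAB _ (Subgroup.mem_subgroupOf.mp a.2))⟩,
        Subgroup.mem_subgroupOf.mpr (hAB _ (Subgroup.mem_subgroupOf.mp a.2))⟩
      invFun := fun b => ⟨⟨t⁻¹ * ((b : ↥H) : G) * t, hA (hBA _ (Subgroup.mem_subgroupOf.mp b.2))⟩,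
        Subgroup.mem_subgroupOf.mpr (hBA _ (Subgroup.mem_subgroupOf.mp b.2))⟩
      left_inv := fun a => Subtype.ext (Subtype.ext (by simp [mul_assoc]))
      right_inv := fun b => Subtype.ext (Subtype.ext (by simp [← mul_assoc]))
      map_mul' := fun a b => Subtype.ext (Subtype.ext (by push_cast; group)) }
  have hφ : ∀ a : A.subgroupOf H, ((φ a : ↥H) : G) = t * ((a : ↥H) : G) * t⁻¹ := fun a => rfl
  refine ⟨φ, hφ, ?_⟩
  have hx : ∀ a : A.subgroupOf H, t * H.subtype ↑a = H.subtype ↑(φ a) * t := by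
    intro a
    simp only [Subgroup.coe_subtype]
    show t * _ = (t * _ * t⁻¹) * t
    group
  let f : HNNExtension ↥H (A.subgroupOf H) (B.subgroupOf H) φ →* G :=
    HNNExtension.lift H.subtype t hx
  have hfof : ∀ h : ↥H, f (HNNExtension.of h) = (h : G) := fun h => by
    simp [f, HNNExtension.lift_of]
  have hft : f HNNExtension.t = t := by simp [f, HNNExtension.lift_t]
  have hsurj : Function.Surjective f := by
    intro g
    have : g ∈ f.range := by
      have le : Subgroup.closure ((H : Set G) ∪ {t}) ≤ f.range := by
        rw [Subgroup.closure_le]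
        rintro x (hx' | rfl)
        · exact ⟨HNNExtension.of ⟨x, hx'⟩, hfof _⟩
        · exact ⟨HNNExtension.t, hft⟩
      rw [hclos] at le
      exact le (Subgroup.mem_top g)
    exact this
  -- injectivity
  have hinj : Function.Injective f := by
    rcases hfull with hfull | hfull
    · -- A = H : ascending, use τ = t
      have haA : ∀ h : ↥H, h ∈ A.subgroupOf H := fun h =>
        Subgroup.mem_subgroupOf.mpr (by rw [hfull]; exact h.2)
      refine inj_aux χ f HNNExtension.of HNNExtension.t
        (fun h => ((φ ⟨h, haA h⟩ : ↥H))) (fun h => HNNExtension.t_mul_of ⟨h, haA h⟩) ?_ ?_ ?_ ?_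
      · intro x
        induction x using HNNExtension.induction_on with
        | of g => exact Subgroup.subset_closure (Or.inl ⟨g, rfl⟩)
        | t => exact Subgroup.subset_closure (Or.inr rfl)
        | mul x y hx hy => exact mul_mem hx hy
        | inv x hx => exact inv_mem hx
      · left; rw [hft]; exact ht
      · intro h; rw [hfof]; exact hker h.2
      · intro h1 h2 hh
        simp only [Function.comp_apply, hfof] at hh
        exact Subtype.ext hh
    · -- B = H : descending, use τ = t⁻¹
      have hbB : ∀ h : ↥H, h ∈ B.subgroupOf H := fun h =>
        Subgroup.mem_subgroupOf.mpr (by rw [hfull]; exact h.2)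
      refine inj_aux χ f HNNExtension.of HNNExtension.t⁻¹
        (fun h => ((φ.symm ⟨h, hbB h⟩ : ↥H))) (fun h => HNNExtension.inv_t_mul_of ⟨h, hbB h⟩)
        ?_ ?_ ?_ ?_
      · intro x
        induction x using HNNExtension.induction_on with
        | of g => exact Subgroup.subset_closure (Or.inl ⟨g, rfl⟩)
        | t =>
          have : HNNExtension.t⁻¹ ∈ Subgroup.closure
              (Set.range (HNNExtension.of (G := ↥H) (A := A.subgroupOf H)
                (B := B.subgroupOf H) (φ := φ)) ∪ {HNNExtension.t⁻¹}) :=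
            Subgroup.subset_closure (Or.inr rfl)
          simpa using inv_mem this
        | mul x y hx hy => exact mul_mem hx hy
        | inv x hx => exact inv_mem hx
      · right; rw [map_inv, hft, map_inv, ht]; rfl
      · intro h; rw [hfof]; exact hker h.2
      · intro h1 h2 hh
        simp only [Function.comp_apply, hfof] at hh
        exact Subtype.ext hh
  exact ⟨MulEquiv.ofBijective f ⟨hinj, hsurj⟩, hfof, hft⟩


section helpers
variable {G : Type*} [Group G] (t : G) (X : Set G)

private def Kset (j : ℤ) : Set G := (fun x => t ^ j * x * (t ^ j)⁻¹) '' X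

private theorem Kset_zero : Kset t X 0 = X := by
  simp [Kset]

private theorem Kset_finite (hX : X.Finite) (j : ℤ) : (Kset t X j).Finite :=
  hX.image _

private theorem Kconj (k j : ℤ) :
    (fun x => t ^ k * x * (t ^ k)⁻¹) '' Kset t X j = Kset t X (j + k) := by
  unfold Kset
  rw [Set.image_image]
  have : (fun x => t ^ k * (t ^ j * x * (t ^ j)⁻¹) * (t ^ k)⁻¹) =
      (fun x : G => t ^ (j + k) * x * (t ^ (j + k))⁻¹) := by
    funext x
    rw [zpow_add]
    group
  rw [this]

private theorem conj_closure (g : G) (s : Set G) :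
    (fun x => g * x * g⁻¹) '' (Subgroup.closure s : Set G) =
      ↑(Subgroup.closure ((fun x => g * x * g⁻¹) '' s)) := by
  have h1 : ⇑(MulAut.conj g).toMonoidHom = fun x => g * x * g⁻¹ := rfl
  rw [← h1, ← Subgroup.coe_map, MonoidHom.map_closure]

private theorem union_reindex (s s' : Set ℤ) (k : ℤ) (h : ∀ j, j ∈ s' ↔ j - k ∈ s) :
    (⋃ j ∈ s, Kset t X (j + k)) = ⋃ j ∈ s', Kset t X j := by
  ext x
  simp only [Set.mem_iUnion, exists_prop]
  constructor
  · rintro ⟨j, hj, hx⟩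
    exact ⟨j + k, (h (j + k)).mpr (by simpa using hj), hx⟩
  · rintro ⟨j, hj, hx⟩
    exact ⟨j - k, (h j).mp hj, by rwa [sub_add_cancel]⟩

end helpers

private theorem finite_subset_iSup {G : Type*} [Group G] {ι : Type*} [Nonempty ι]
    {f : ι → Subgroup G} (hdir : Directed (· ≤ ·) f) {s : Set G} (hs : s.Finite)
    (h : s ⊆ ↑(⨆ i, f i)) : ∃ i, s ⊆ ↑(f i) := by
  refine Set.Finite.induction_on (motive := fun s _ => s ⊆ ↑(⨆ i, f i) → ∃ i, s ⊆ ↑(f i)) s hs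
    (fun _ => ⟨Classical.arbitrary ι, by simp⟩) ?_ h
  rintro x s hxs hsfin ih hsub
  obtain ⟨i, hi⟩ := ih (fun y hy => hsub (Set.mem_insert_of_mem x hy))
  have hx : x ∈ ⨆ i, f i := hsub (Set.mem_insert x s)
  obtain ⟨j, hj⟩ := (Subgroup.mem_iSup_of_directed hdir).mp hx
  obtain ⟨k, hik, hjk⟩ := hdir i j
  exact ⟨k, Set.insert_subset (hjk hj) (fun y hy => hik (hi hy))⟩

private theorem Kshift {G : Type*} [Group G] (t : G) (X : Set G) (s : Set ℤ)
    (h : X ⊆ ↑(Subgroup.closure (⋃ j ∈ s, Kset t X j))) (k : ℤ) :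
    Kset t X k ⊆ ↑(Subgroup.closure (⋃ j ∈ s, Kset t X (j + k))) := by
  rintro y ⟨x, hx, rfl⟩
  have hx1 : x ∈ (Subgroup.closure (⋃ j ∈ s, Kset t X j) : Set G) := h hx
  have hx2 : t ^ k * x * (t ^ k)⁻¹ ∈
      (fun x => t ^ k * x * (t ^ k)⁻¹) '' (Subgroup.closure (⋃ j ∈ s, Kset t X j) : Set G) :=
    ⟨x, hx1, rfl⟩
  rw [conj_closure] at hx2
  rw [Set.image_iUnion₂] at hx2
  simp only [Kconj] at hx2
  exact hx2


/-- If `G` is a finitely generated group with a surjective homomorphism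
`χ : G → ℤ`, then either `ker χ` is finitely generated, or `G` is a proper HNN extension
with associated homomorphism `χ`: there are a subgroup `H ≤ ker χ`, subgroups `A, B ≤ H`
with at least one of them proper in `H`, and `t ∈ G` with `χ(t) = 1`, such that
`t A t⁻¹ = B`, `G = ⟨H, t⟩`, and the canonical homomorphism from the HNN extension of `H`
with associated subgroups `A` and `B` (stable letter ↦ `t`, `θ : A → B` given by
conjugation by `t`) to `G` is an isomorphism. -/
theorem statement9 {G : Type*} [Group G] (hfg : Group.FG G)
    (χ : G →* Multiplicative ℤ) (hsurj : Function.Surjective χ) :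
    χ.ker.FG ∨
    ∃ (H : Subgroup G), H ≤ χ.ker ∧
    ∃ A B : Subgroup G, A ≤ H ∧ B ≤ H ∧ (A < H ∨ B < H) ∧
    ∃ t : G, χ t = Multiplicative.ofAdd 1 ∧
      (fun g => t * g * t⁻¹) '' (A : Set G) = (B : Set G) ∧
      Subgroup.closure ((H : Set G) ∪ {t}) = ⊤ ∧
      ∃ (φ : (A.subgroupOf H) ≃* (B.subgroupOf H)),
        (∀ a : A.subgroupOf H, ((φ a : ↥H) : G) = t * ((a : ↥H) : G) * t⁻¹) ∧
        ∃ e : HNNExtension ↥H (A.subgroupOf H) (B.subgroupOf H) φ ≃* G,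
          (∀ h : ↥H, e (HNNExtension.of h) = (h : G)) ∧ e HNNExtension.t = t := by

  classical
  obtain ⟨t, ht⟩ := hsurj (Multiplicative.ofAdd 1)
  obtain ⟨S, hSclos, hSfin⟩ := Group.fg_iff.mp hfg
  set X : Set G := (fun s => s * t ^ (-(χ s).toAdd)) '' S with hX
  have hXfin : X.Finite := hSfin.image _
  have hXker : ∀ x ∈ X, x ∈ χ.ker := by
    rintro _ ⟨s, hs, rfl⟩
    rw [MonoidHom.mem_ker, map_mul, map_zpow, ht]
    apply Multiplicative.toAdd.injective
    simp
  have hXt : Subgroup.closure (X ∪ {t}) = ⊤ := by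
    rw [← top_le_iff, ← hSclos, Subgroup.closure_le]
    intro s hs
    have h1 : s * t ^ (-(χ s).toAdd) ∈ Subgroup.closure (X ∪ {t}) :=
      Subgroup.subset_closure (Or.inl ⟨s, hs, rfl⟩)
    have h2 : t ∈ Subgroup.closure (X ∪ {t}) := Subgroup.subset_closure (Or.inr rfl)
    have : s = (s * t ^ (-(χ s).toAdd)) * t ^ ((χ s).toAdd) := by
      rw [mul_assoc, ← zpow_add]
      simp
    rw [this]
    exact mul_mem h1 (zpow_mem h2 _)
  have hKker : ∀ j, Kset t X j ⊆ (χ.ker : Set G) := by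
    rintro j _ ⟨x, hx, rfl⟩
    have hx1 : χ x = 1 := hXker x hx
    simp [SetLike.mem_coe, MonoidHom.mem_ker, map_mul, map_inv, map_zpow, hx1]
  set N : Subgroup G := Subgroup.closure (⋃ j ∈ (Set.univ : Set ℤ), Kset t X j) with hN
  have hNker : N ≤ χ.ker :=
    (Subgroup.closure_le _).mpr (Set.iUnion₂_subset fun j _ => hKker j)
  have hXN : X ⊆ (N : Set G) := by
    intro x hx
    exact Subgroup.subset_closure
      (Set.mem_biUnion (Set.mem_univ (0 : ℤ)) (by rwa [Kset_zero]))
  have hconjN : ∀ k : ℤ, (fun x => t ^ k * x * (t ^ k)⁻¹) '' (N : Set G) = N := by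
    intro k
    rw [hN, conj_closure, Set.image_iUnion₂]
    simp only [Kconj]
    rw [union_reindex t X Set.univ Set.univ k (by simp)]
  haveI hNnormal : N.Normal := by
    rw [← Subgroup.normalizer_eq_top_iff, ← top_le_iff, ← hXt, Subgroup.closure_le]
    rintro y (hy | hy1)
    · exact Subgroup.le_normalizer (hXN hy)
    · rw [show y = t from hy1]
      simp only [SetLike.mem_coe]
      rw [Subgroup.mem_normalizer_iff]
      intro h
      constructor
      · intro hh
        have h2 : t ^ (1:ℤ) * h * (t ^ (1:ℤ))⁻¹ ∈ (fun x => t ^ (1:ℤ) * x * (t ^ (1:ℤ))⁻¹) ''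
            (N : Set G) := ⟨h, hh, rfl⟩
        rw [hconjN 1] at h2
        simpa using h2
      · intro hh
        have h2 : t ^ (-1:ℤ) * (t * h * t⁻¹) * (t ^ (-1:ℤ))⁻¹ ∈
            (fun y => t ^ (-1:ℤ) * y * (t ^ (-1:ℤ))⁻¹) '' (N : Set G) := ⟨_, hh, rfl⟩
        rw [hconjN (-1)] at h2
        simpa [mul_assoc] using h2
  have hkerN : χ.ker ≤ N := by
    intro g hg
    have hgsup : g ∈ N ⊔ Subgroup.zpowers t := by
      have hmem : g ∈ Subgroup.closure (X ∪ {t}) := by rw [hXt]; exact Subgroup.mem_top g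
      refine (Subgroup.closure_le _).mpr ?_ hmem
      rintro x (hx | hx1)
      · exact Subgroup.mem_sup_left (hXN hx)
      · rw [show x = t from hx1]
        exact Subgroup.mem_sup_right (Subgroup.mem_zpowers t)
    have hgset : g ∈ (↑(N ⊔ Subgroup.zpowers t) : Set G) := hgsup
    rw [Subgroup.normal_mul] at hgset
    obtain ⟨n, hn, z, hz, rfl⟩ := hgset
    obtain ⟨m, rfl⟩ := Subgroup.mem_zpowers_iff.mp hz
    have hm : m = 0 := by
      have h1 : χ (n * t ^ m) = 1 := hg
      rw [map_mul, map_zpow, ht, (hNker hn : n ∈ χ.ker)] at h1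
      have := congrArg Multiplicative.toAdd h1
      simpa using this
    subst hm
    simpa using hn
  have hkerEq : χ.ker = N := le_antisymm hkerN hNker
  set Bp : Subgroup G := Subgroup.closure (⋃ j ∈ Set.Ici (1:ℤ), Kset t X j) with hBp
  set Am : Subgroup G := Subgroup.closure (⋃ j ∈ Set.Iic (-1:ℤ), Kset t X j) with hAm
  by_cases hpos : X ⊆ (Bp : Set G)
  · by_cases hneg : X ⊆ (Am : Set G)
    · -- both: kernel is finitely generated
      left
      set Dp : ℕ → Subgroup G :=
        fun n => Subgroup.closure (⋃ j ∈ Set.Icc (1:ℤ) ((n:ℤ)+1), Kset t X j) with hDp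
      set Dm : ℕ → Subgroup G :=
        fun n => Subgroup.closure (⋃ j ∈ Set.Icc (-(n:ℤ)-1) (-1:ℤ), Kset t X j) with hDm
      have hDpmono : Monotone Dp := fun m n hmn =>
        Subgroup.closure_mono (Set.biUnion_subset_biUnion_left (fun j hj => by
          simp only [Set.mem_Icc] at *; omega))
      have hDmmono : Monotone Dm := fun m n hmn =>
        Subgroup.closure_mono (Set.biUnion_subset_biUnion_left (fun j hj => by
          simp only [Set.mem_Icc] at *; omega))
      have hBpsup : Bp ≤ ⨆ n, Dp n := by
        rw [hBp]
        apply (Subgroup.closure_le _).mpr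
        intro x hx
        rw [Set.mem_iUnion₂] at hx
        obtain ⟨j, hj, hx⟩ := hx
        have hj1 : (1:ℤ) ≤ j := hj
        refine SetLike.le_def.mp (le_iSup Dp (j-1).toNat) ?_
        exact Subgroup.subset_closure
          (Set.mem_biUnion (by simp only [Set.mem_Icc]; omega) hx)
      have hAmsup : Am ≤ ⨆ n, Dm n := by
        rw [hAm]
        apply (Subgroup.closure_le _).mpr
        intro x hx
        rw [Set.mem_iUnion₂] at hx
        obtain ⟨j, hj, hx⟩ := hx
        have hj1 : j ≤ (-1:ℤ) := hj
        refine SetLike.le_def.mp (le_iSup Dm (-j-1).toNat) ?_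
        exact Subgroup.subset_closure
          (Set.mem_biUnion (by simp only [Set.mem_Icc]; omega) hx)
      obtain ⟨np, hnp⟩ := finite_subset_iSup hDpmono.directed_le hXfin
        (fun x hx => hBpsup (hpos hx))
      obtain ⟨nm, hnm⟩ := finite_subset_iSup hDmmono.directed_le hXfin
        (fun x hx => hAmsup (hneg hx))
      set a : ℤ := -(nm:ℤ)-1 with ha
      set b : ℤ := (np:ℤ)+1 with hb
      set L : Subgroup G := Subgroup.closure (⋃ j ∈ Set.Icc a b, Kset t X j) with hL
      have hup : ∀ k : ℤ, Kset t X k ⊆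
          ↑(Subgroup.closure (⋃ j ∈ Set.Icc (1+k) (b+k), Kset t X j)) := by
        intro k
        have h2 := Kshift t X (Set.Icc 1 b) hnp k
        rwa [union_reindex t X _ (Set.Icc (1+k) (b+k)) k
          (by intro j; simp only [Set.mem_Icc]; omega)] at h2
      have hdown : ∀ k : ℤ, Kset t X k ⊆
          ↑(Subgroup.closure (⋃ j ∈ Set.Icc (a+k) (-1+k), Kset t X j)) := by
        intro k
        have h2 := Kshift t X (Set.Icc a (-1)) hnm k
        rwa [union_reindex t X _ (Set.Icc (a+k) (-1+k)) k
          (by intro j; simp only [Set.mem_Icc]; omega)] at h2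
      have main : ∀ d : ℕ, ∀ j : ℤ, a - d ≤ j → j ≤ b + d → Kset t X j ⊆ (L : Set G) := by
        intro d
        induction d with
        | zero =>
          intro j h1 h2 x hx
          exact Subgroup.subset_closure
            (Set.mem_biUnion (by simp only [Set.mem_Icc]; omega) hx)
        | succ d ih =>
          intro j h1 h2
          by_cases hj1 : j ≤ b + d
          · by_cases hj2 : a - d ≤ j
            · exact ih j hj2 hj1
            · refine (hup j).trans ?_
              refine SetLike.coe_subset_coe.mpr ((Subgroup.closure_le _).mpr
                (Set.iUnion₂_subset fun i hi => ?_))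
              simp only [Set.mem_Icc] at hi
              exact ih i (by omega) (by omega)
          · refine (hdown j).trans ?_
            refine SetLike.coe_subset_coe.mpr ((Subgroup.closure_le _).mpr
              (Set.iUnion₂_subset fun i hi => ?_))
            simp only [Set.mem_Icc] at hi
            exact ih i (by omega) (by omega)
      refine (Subgroup.fg_iff _).mpr ⟨⋃ j ∈ Set.Icc a b, Kset t X j, ?_,
        Set.Finite.biUnion (Set.finite_Icc a b) (fun j _ => Kset_finite t X hXfin j)⟩
      refine le_antisymm ?_ ?_
      · exact (Subgroup.closure_le _).mpr (Set.iUnion₂_subset fun j _ => hKker j)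
      · rw [hkerEq, hN]
        apply (Subgroup.closure_le _).mpr
        refine Set.iUnion₂_subset fun j _ => ?_
        obtain ⟨d, hd1, hd2⟩ : ∃ d : ℕ, a - d ≤ j ∧ j ≤ b + d :=
          ⟨j.natAbs + nm + np + 2, by omega, by omega⟩
        exact main d j hd1 hd2
    · -- descending case
      right
      set Hm : Subgroup G := Subgroup.closure (⋃ j ∈ Set.Iic (0:ℤ), Kset t X j) with hHm
      have hHker : Hm ≤ χ.ker :=
        (Subgroup.closure_le _).mpr (Set.iUnion₂_subset fun j _ => hKker j)
      have hAH : Am ≤ Hm :=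
        Subgroup.closure_mono (Set.biUnion_subset_biUnion_left (fun j hj => by
          simp only [Set.mem_Iic] at *; omega))
      have hXHm : X ⊆ (Hm : Set G) := fun x hx =>
        Subgroup.subset_closure (Set.mem_biUnion (by simp : (0:ℤ) ∈ Set.Iic (0:ℤ))
          (by rwa [Kset_zero]))
      have himg : (fun g => t * g * t⁻¹) '' (Am : Set G) = (Hm : Set G) := by
        have h1 : (fun g : G => t * g * t⁻¹) = fun g => t ^ (1:ℤ) * g * (t ^ (1:ℤ))⁻¹ := by
          funext g; rw [zpow_one]
        rw [h1, hAm, conj_closure, Set.image_iUnion₂]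
        simp only [Kconj]
        rw [union_reindex t X (Set.Iic (-1)) (Set.Iic 0) 1
          (by intro j; simp only [Set.mem_Iic]; omega)]
      have hproper : Am < Hm :=
        lt_of_le_of_ne hAH (by intro hEq; exact hneg (hEq ▸ hXHm))
      have hclos : Subgroup.closure ((Hm : Set G) ∪ {t}) = ⊤ := by
        rw [← top_le_iff, ← hXt]
        exact Subgroup.closure_mono (Set.union_subset_union_left _ hXHm)
      obtain ⟨φ, hφ, e, he1, he2⟩ := hnn_package χ t Hm Am Hm ht hHker hAH le_rfl himg
        (Or.inr rfl) hclos
      exact ⟨Hm, hHker, Am, Hm, hAH, le_rfl, Or.inl hproper, t, ht, himg, hclos,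
        φ, hφ, e, he1, he2⟩
  · -- ascending case
    right
    set Hp : Subgroup G := Subgroup.closure (⋃ j ∈ Set.Ici (0:ℤ), Kset t X j) with hHp
    have hHker : Hp ≤ χ.ker :=
      (Subgroup.closure_le _).mpr (Set.iUnion₂_subset fun j _ => hKker j)
    have hBH : Bp ≤ Hp :=
      Subgroup.closure_mono (Set.biUnion_subset_biUnion_left (fun j hj => by
        simp only [Set.mem_Ici] at *; omega))
    have hXHp : X ⊆ (Hp : Set G) := fun x hx =>
      Subgroup.subset_closure (Set.mem_biUnion (by simp : (0:ℤ) ∈ Set.Ici (0:ℤ))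
        (by rwa [Kset_zero]))
    have himg : (fun g => t * g * t⁻¹) '' (Hp : Set G) = (Bp : Set G) := by
      have h1 : (fun g : G => t * g * t⁻¹) = fun g => t ^ (1:ℤ) * g * (t ^ (1:ℤ))⁻¹ := by
        funext g; rw [zpow_one]
      rw [h1, hHp, conj_closure, Set.image_iUnion₂]
      simp only [Kconj]
      rw [union_reindex t X (Set.Ici 0) (Set.Ici 1) 1 (by intro j; simp only [Set.mem_Ici, Set.mem_Iic]; omega)]
    have hproper : Bp < Hp :=
      lt_of_le_of_ne hBH (by intro hEq; exact hpos (hEq ▸ hXHp))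
    have hclos : Subgroup.closure ((Hp : Set G) ∪ {t}) = ⊤ := by
      rw [← top_le_iff, ← hXt]
      exact Subgroup.closure_mono (Set.union_subset_union_left _ hXHp)
    obtain ⟨φ, hφ, e, he1, he2⟩ := hnn_package χ t Hp Hp Bp ht hHker le_rfl hBH himg
      (Or.inl rfl) hclos
    exact ⟨Hp, hHker, Hp, Bp, le_rfl, hBH, Or.inr hproper, t, ht, himg, hclos, φ, hφ, e, he1, he2⟩
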